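/- arXiv:1612.05495 — 2 statements merged into one kernel-verified Lean document; each statement's English description precedes it below -/
import Mathlib

section
/- Let $M \geq 1$ and let $y_1, \dots, y_M$ be non-negative real numbers with $\sum_{m=1}^M y_m = N$, extended periodically by $y_m = y_{m \bmod M}$. For an integer $s \geq 1$ define $H(s) = \sum_{m=1}^M \sum_{\ell=-s+1}^{s-1} y_m y_{m+\ell}$. Then for every integer $S \geq 1$ with $2S < M$ we have $\frac{1}{S} \sum_{s=1}^S H(s) \geq \frac{S N^2}{M}$. -/
open Finset

private lemma shift_one (M : ℕ) (f : ℤ → ℝ)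
    (hper : ∀ x : ℤ, f (x + M) = f x) :
    ∑ m ∈ range M, f ((m : ℤ) + 1) = ∑ m ∈ range M, f (m : ℤ) := by
  cases M with
  | zero => simp
  | succ K =>
    have cast1 : ∀ m : ℕ, ((m : ℤ) + 1) = ((m + 1 : ℕ) : ℤ) := by
      intro m; push_cast; ring
    calc ∑ m ∈ range (K + 1), f ((m : ℤ) + 1)
        = ∑ m ∈ range (K + 1), f ((m + 1 : ℕ) : ℤ) := by
          apply Finset.sum_congr rfl; intro m _; rw [cast1]
      _ = ∑ m ∈ range K, f ((m + 1 : ℕ) : ℤ) + f ((K + 1 : ℕ) : ℤ) :=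
          Finset.sum_range_succ _ K
      _ = ∑ m ∈ range K, f ((m + 1 : ℕ) : ℤ) + f ((0 : ℕ) : ℤ) := by
          congr 1
          have h0 := hper 0
          rw [zero_add] at h0
          simpa using h0
      _ = ∑ m ∈ range (K + 1), f (m : ℤ) :=
          (Finset.sum_range_succ' (fun m => f (m : ℤ)) K).symm

private lemma shift_int (M : ℕ) (f : ℤ → ℝ)
    (hper : ∀ x : ℤ, f (x + M) = f x) (a : ℤ) :
    ∑ m ∈ range M, f ((m : ℤ) + a) = ∑ m ∈ range M, f (m : ℤ) := by
  induction a using Int.induction_on with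
  | zero => simp
  | succ k ih =>
    have := shift_one M (fun x => f (x + k)) (fun x => by
      show f (x + (M : ℤ) + k) = f (x + k)
      rw [show x + (M : ℤ) + k = (x + k) + M by ring, hper])
    rw [← ih, ← this]
    apply Finset.sum_congr rfl
    intro m _
    congr 1
    ring
  | pred k ih =>
    have := shift_one M (fun x => f (x + (-(k : ℤ) - 1))) (fun x => by
      show f (x + (M : ℤ) + (-(k : ℤ) - 1)) = f (x + (-(k : ℤ) - 1))
      rw [show x + (M : ℤ) + (-(k : ℤ) - 1) = (x + (-(k : ℤ) - 1)) + M by ring, hper])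
    have h2 : ∑ m ∈ range M, f ((m : ℤ) + (-(k : ℤ) - 1))
        = ∑ m ∈ range M, f ((m : ℤ) + -(k : ℤ)) := by
      rw [← this]
      apply Finset.sum_congr rfl
      intro m _
      congr 1
      ring
    calc ∑ m ∈ range M, f ((m : ℤ) + (-(k : ℤ) - 1))
        = ∑ m ∈ range M, f ((m : ℤ) + -(k : ℤ)) := h2
      _ = ∑ m ∈ range M, f (m : ℤ) := ih

private lemma sum_Icc_eq_range (h : ℤ → ℝ) (a : ℤ) (n : ℕ) :
    ∑ ℓ ∈ Finset.Icc a (a + n), h ℓ = ∑ k ∈ Finset.range (n + 1), h (a + k) := by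
  induction n with
  | zero => simp
  | succ n ih =>
    have hins : Finset.Icc a (a + (n + 1 : ℕ)) = insert (a + n + 1) (Finset.Icc a (a + n)) := by
      ext x
      simp only [Finset.mem_Icc, Finset.mem_insert]
      push_cast
      omega
    have hnot : (a + n + 1) ∉ Finset.Icc a (a + (n : ℕ)) := by
      simp only [Finset.mem_Icc]
      omega
    rw [hins, Finset.sum_insert hnot, ih,
      Finset.sum_range_succ (fun k => h (a + k)) (n + 1)]
    rw [show a + ((n + 1 : ℕ) : ℤ) = a + (n : ℤ) + 1 from by push_cast; ring]
    ring

private lemma full_Icc_split (h : ℤ → ℝ) (n : ℕ) :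
    ∑ ℓ ∈ Finset.Icc (-(n : ℤ)) (n : ℤ), h ℓ
      = ∑ k ∈ range n, h ((n : ℤ) - k) + (∑ k ∈ range n, h ((k : ℤ) - n) + h 0) := by
  have h1 : ∑ ℓ ∈ Finset.Icc (-(n : ℤ)) ((-(n : ℤ)) + (2 * n : ℕ)), h ℓ
      = ∑ k ∈ range (2 * n + 1), h (-(n : ℤ) + k) := sum_Icc_eq_range h _ _
  have hb : (-(n : ℤ)) + ((2 * n : ℕ) : ℤ) = (n : ℤ) := by push_cast; ring
  rw [hb] at h1
  rw [h1, show 2 * n + 1 = n + (n + 1) from by ring,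
    Finset.sum_range_add (fun k => h (-(n : ℤ) + k)) n (n + 1),
    Finset.sum_range_succ' (fun x => h (-(n : ℤ) + ((n + x : ℕ) : ℤ))) n]
  have hA : ∑ k ∈ range n, h (-(n : ℤ) + (k : ℤ)) = ∑ k ∈ range n, h ((k : ℤ) - n) := by
    apply Finset.sum_congr rfl; intro k _; congr 1; ring
  have hB : ∑ x ∈ range n, h (-(n : ℤ) + ((n + (x + 1) : ℕ) : ℤ))
      = ∑ x ∈ range n, h ((x : ℤ) + 1) := by
    apply Finset.sum_congr rfl; intro x _; congr 1; push_cast; ring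
  have hC : h (-(n : ℤ) + ((n + 0 : ℕ) : ℤ)) = h 0 := by
    congr 1; push_cast; ring
  have h4 : ∑ k ∈ range n, h ((n : ℤ) - k) = ∑ k ∈ range n, h ((k : ℤ) + 1) := by
    rw [← Finset.sum_range_reflect (fun k => h ((k : ℤ) + 1)) n]
    apply Finset.sum_congr rfl
    intro k hk
    rw [Finset.mem_range] at hk
    congr 1
    have : ((n - 1 - k : ℕ) : ℤ) = (n : ℤ) - 1 - k := by omega
    rw [this]
    ring
  rw [hA, hB, hC, h4]
  ring

private lemma count_lemma (h : ℤ → ℝ) (S : ℕ) :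
    ∑ s ∈ Finset.Icc 1 S, ∑ ℓ ∈ Finset.Icc (-(s : ℤ) + 1) ((s : ℤ) - 1), h ℓ
      = ∑ k ∈ range S, ∑ k' ∈ range S, h ((k' : ℤ) - k) := by
  induction S with
  | zero => simp
  | succ S ih =>
    have hins : Finset.Icc 1 (S + 1) = insert (S + 1) (Finset.Icc 1 S) := by
      ext x
      simp only [Finset.mem_Icc, Finset.mem_insert]
      omega
    have hnot : S + 1 ∉ Finset.Icc 1 S := by simp
    rw [hins, Finset.sum_insert hnot, ih,
      Finset.sum_range_succ (fun k => ∑ k' ∈ range (S + 1), h ((k' : ℤ) - k)) S]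
    have hinner : ∑ k ∈ range S, ∑ k' ∈ range (S + 1), h ((k' : ℤ) - k)
        = ∑ k ∈ range S, (∑ k' ∈ range S, h ((k' : ℤ) - k) + h ((S : ℤ) - k)) := by
      apply Finset.sum_congr rfl
      intro k _
      exact Finset.sum_range_succ (fun k' => h ((k' : ℤ) - k)) S
    have hlast : ∑ k' ∈ range (S + 1), h ((k' : ℤ) - S)
        = ∑ k' ∈ range S, h ((k' : ℤ) - S) + h 0 := by
      rw [Finset.sum_range_succ (fun k' => h ((k' : ℤ) - S)) S]
      norm_num
    rw [hinner, Finset.sum_add_distrib, hlast]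
    rw [show (-(((S : ℕ) + 1 : ℕ) : ℤ) + 1) = -(S : ℤ) from by push_cast; ring,
      show ((((S : ℕ) + 1 : ℕ) : ℤ) - 1) = (S : ℤ) from by push_cast; ring]
    rw [full_Icc_split h S]
    ring

theorem stmt_0 (M : ℕ) (hM : 1 ≤ M) (y : ℤ → ℝ) (N : ℝ)
    (hy : ∀ m : ℤ, 0 ≤ y m)
    (hper : ∀ m : ℤ, y (m + M) = y m)
    (hsum : ∑ m ∈ Finset.range M, y (m : ℤ) = N)
    (S : ℕ) (hS : 1 ≤ S) (hSM : 2 * S < M) :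
    (S : ℝ) * N ^ 2 / M ≤
      (1 / S) * ∑ s ∈ Finset.Icc 1 S,
        ∑ m ∈ Finset.range M, ∑ ℓ ∈ Finset.Icc (-(s : ℤ) + 1) ((s : ℤ) - 1),
          y (m : ℤ) * y ((m : ℤ) + ℓ) := by
  set g : ℤ → ℝ := fun m => ∑ k ∈ range S, y (m + k) with hg
  -- step 1: the big double sum is a sum of squares
  have step1 : ∑ s ∈ Finset.Icc 1 S,
        ∑ m ∈ Finset.range M, ∑ ℓ ∈ Finset.Icc (-(s : ℤ) + 1) ((s : ℤ) - 1),
          y (m : ℤ) * y ((m : ℤ) + ℓ)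
      = ∑ m ∈ Finset.range M, (g (m : ℤ)) ^ 2 := by
    have hcell : ∀ k k' : ℕ,
        ∑ m ∈ Finset.range M, y (m : ℤ) * y ((m : ℤ) + ((k' : ℤ) - k))
          = ∑ m ∈ Finset.range M, y ((m : ℤ) + k) * y ((m : ℤ) + k') := by
      intro k k'
      have fper : ∀ x : ℤ, y (x + M) * y ((x + M) + ((k' : ℤ) - k))
          = y x * y (x + ((k' : ℤ) - k)) := by
        intro x
        rw [hper x, show (x + M) + ((k' : ℤ) - k) = (x + ((k' : ℤ) - k)) + M by ring,
          hper]
      have hsh := shift_int M (fun x => y x * y (x + ((k' : ℤ) - k))) fper (k : ℤ)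
      rw [← hsh]
      apply Finset.sum_congr rfl
      intro m _
      congr 2
      ring
    calc ∑ s ∈ Finset.Icc 1 S,
          ∑ m ∈ Finset.range M, ∑ ℓ ∈ Finset.Icc (-(s : ℤ) + 1) ((s : ℤ) - 1),
            y (m : ℤ) * y ((m : ℤ) + ℓ)
        = ∑ s ∈ Finset.Icc 1 S, ∑ ℓ ∈ Finset.Icc (-(s : ℤ) + 1) ((s : ℤ) - 1),
            ∑ m ∈ Finset.range M, y (m : ℤ) * y ((m : ℤ) + ℓ) := by
          apply Finset.sum_congr rfl
          intro s _
          exact Finset.sum_comm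
      _ = ∑ k ∈ range S, ∑ k' ∈ range S,
            ∑ m ∈ Finset.range M, y (m : ℤ) * y ((m : ℤ) + ((k' : ℤ) - k)) :=
          count_lemma (fun ℓ => ∑ m ∈ Finset.range M, y (m : ℤ) * y ((m : ℤ) + ℓ)) S
      _ = ∑ k ∈ range S, ∑ k' ∈ range S,
            ∑ m ∈ Finset.range M, y ((m : ℤ) + k) * y ((m : ℤ) + k') := by
          apply Finset.sum_congr rfl
          intro k _
          apply Finset.sum_congr rfl
          intro k' _
          exact hcell k k'
      _ = ∑ k ∈ range S, ∑ m ∈ Finset.range M,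
            ∑ k' ∈ range S, y ((m : ℤ) + k) * y ((m : ℤ) + k') := by
          apply Finset.sum_congr rfl
          intro k _
          exact Finset.sum_comm
      _ = ∑ m ∈ Finset.range M, ∑ k ∈ range S,
            ∑ k' ∈ range S, y ((m : ℤ) + k) * y ((m : ℤ) + k') :=
          Finset.sum_comm
      _ = ∑ m ∈ Finset.range M, (g (m : ℤ)) ^ 2 := by
          apply Finset.sum_congr rfl
          intro m _
          rw [hg]
          rw [sq]
          exact (Finset.sum_mul_sum (range S) (range S)
            (fun k => y ((m : ℤ) + k)) (fun k' => y ((m : ℤ) + k'))).symm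
  -- step 2: total sum of g is S * N
  have step2 : ∑ m ∈ Finset.range M, g (m : ℤ) = (S : ℝ) * N := by
    rw [hg]
    simp only []
    rw [Finset.sum_comm]
    have : ∀ k : ℕ, ∑ m ∈ Finset.range M, y ((m : ℤ) + k) = N := by
      intro k
      rw [shift_int M y hper (k : ℤ), hsum]
    calc ∑ k ∈ range S, ∑ m ∈ Finset.range M, y ((m : ℤ) + k)
        = ∑ k ∈ range S, N := Finset.sum_congr rfl (fun k _ => this k)
      _ = (S : ℝ) * N := by
          rw [Finset.sum_const, Finset.card_range, nsmul_eq_mul]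
  -- step 3: Cauchy-Schwarz
  have cauchy : ((S : ℝ) * N) ^ 2 ≤ (M : ℝ) * ∑ m ∈ Finset.range M, (g (m : ℤ)) ^ 2 := by
    have := Finset.sum_mul_sq_le_sq_mul_sq (Finset.range M)
      (fun _ => (1 : ℝ)) (fun m => g (m : ℤ))
    simp only [one_mul, one_pow, Finset.sum_const, Finset.card_range,
      nsmul_eq_mul, mul_one] at this
    rw [← step2]
    exact this
  rw [step1]
  have hM' : (0 : ℝ) < M := by exact_mod_cast hM
  have hS' : (0 : ℝ) < S := by exact_mod_cast hS
  rw [div_le_iff₀ hM', div_mul_eq_mul_div, div_mul_eq_mul_div, le_div_iff₀ hS']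
  nlinarith [cauchy]
end

section
/- Let $x_1, \dots, x_N \in [0,1)$ and for an integer $s$ with $1 \leq s$ and $2s < N$, set $F_N(s) = \frac{1}{N}\#\{(m,n) : 1 \leq m,n \leq N,\ m \neq n,\ \|x_m - x_n\| \leq s/N\}$. Then for every integer $S \geq 1$ with $2S < N$, $\frac{1}{S}\sum_{s=1}^{S} (F_N(s) + 1) \geq S$. -/
open Finset

/-- Distance to the nearest integer. -/
noncomputable def distToInt (t : ℝ) : ℝ := |t - round t|


lemma cardC' {N S : ℕ} [NeZero N] (hSN : 2 * S < N) (d : ZMod N) :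
    ((range S ×ˢ range S).filter
      (fun q : ℕ × ℕ => ((q.1 : ZMod N) - (q.2 : ZMod N)) = d)).card
      ≤ S - d.valMinAbs.natAbs := by
  set e := d.valMinAbs with he
  have hE : 2 * e.natAbs ≤ N := by
    have := ZMod.natAbs_valMinAbs_le d
    omega
  have key : ∀ q : ℕ × ℕ, q ∈ (range S ×ˢ range S).filter
      (fun q : ℕ × ℕ => ((q.1 : ZMod N) - (q.2 : ZMod N)) = d) →
      (q.1 : ℤ) - q.2 = e ∧ q.1 < S ∧ q.2 < S := by
    intro q hq
    simp only [mem_filter, mem_product, mem_range] at hq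
    obtain ⟨⟨h1, h2⟩, h3⟩ := hq
    refine ⟨?_, h1, h2⟩
    have hcast : (((q.1 : ℤ) - q.2 - e : ℤ) : ZMod N) = 0 := by
      push_cast
      rw [h3, he, ZMod.coe_valMinAbs, sub_self]
    have hdvd : (N : ℤ) ∣ ((q.1 : ℤ) - q.2 - e) :=
      (ZMod.intCast_zmod_eq_zero_iff_dvd _ _).1 hcast
    obtain ⟨K, hK⟩ := hdvd
    have hee1 : e ≤ (e.natAbs : ℤ) := Int.le_natAbs
    have hee2 : -(e.natAbs : ℤ) ≤ e := by omega
    have hEZ : 2 * (e.natAbs : ℤ) ≤ N := by exact_mod_cast hE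
    have hSZ : 2 * (S : ℤ) < N := by exact_mod_cast hSN
    have hq1 : (q.1 : ℤ) < S := by exact_mod_cast h1
    have hq2 : (q.2 : ℤ) < S := by exact_mod_cast h2
    have hq1' : (0:ℤ) ≤ q.1 := Int.natCast_nonneg _
    have hq2' : (0:ℤ) ≤ q.2 := Int.natCast_nonneg _
    have hN : (0:ℤ) < N := by exact_mod_cast Nat.pos_of_ne_zero (NeZero.ne N)
    have hub : (N:ℤ) * K < N * 1 := by rw [← hK]; linarith
    have hlb : (N:ℤ) * (-1) < N * K := by rw [← hK]; linarith
    have hK1 : K < 1 := lt_of_mul_lt_mul_left hub (le_of_lt hN)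
    have hK2 : -1 < K := lt_of_mul_lt_mul_left hlb (le_of_lt hN)
    have hK0 : K = 0 := by omega
    rw [hK0, mul_zero] at hK
    omega
  calc ((range S ×ˢ range S).filter
      (fun q : ℕ × ℕ => ((q.1 : ZMod N) - (q.2 : ZMod N)) = d)).card
      ≤ (range (S - e.natAbs)).card := by
        apply Finset.card_le_card_of_injOn (fun q => min q.1 q.2)
        · intro q hq
          obtain ⟨h1, h2, h3⟩ := key q hq
          simp only [mem_coe, mem_range]
          omega
        · intro q hq q' hq' hmin
          obtain ⟨h1, h2, h3⟩ := key q hq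
          obtain ⟨h1', h2', h3'⟩ := key q' hq'
          simp only at hmin
          have : q.1 = q'.1 ∧ q.2 = q'.2 := by omega
          exact Prod.ext this.1 this.2
    _ = S - e.natAbs := card_range _


lemma cardA {N S : ℕ} [NeZero N] {t : ℝ} {d : ZMod N} {a b : ℤ}
    (hta : |(N : ℝ) * t - ((a : ℝ) - b)| < 1) (hd : ((a - b : ℤ) : ZMod N) = d) :
    S - d.valMinAbs.natAbs ≤ ((Icc 1 S).filter (fun s : ℕ => distToInt t ≤ (s : ℝ) / N)).card := by
  set e := d.valMinAbs with he
  rcases le_or_gt S e.natAbs with h | h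
  · simp [Nat.sub_eq_zero_of_le h]
  · have hdvd : (N : ℤ) ∣ (a - b - e) := by
      have hcast : ((a - b - e : ℤ) : ZMod N) = 0 := by
        push_cast
        rw [← Int.cast_sub, hd, he, ZMod.coe_valMinAbs, sub_self]
      exact (ZMod.intCast_zmod_eq_zero_iff_dvd _ _).1 hcast
    obtain ⟨K, hK⟩ := hdvd
    have hN : (0 : ℝ) < N := by
      have := Nat.pos_of_ne_zero (NeZero.ne N); exact_mod_cast this
    have hsub : Icc (e.natAbs + 1) S ⊆ (Icc 1 S).filter (fun s => distToInt t ≤ (s : ℝ) / N) := by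
      intro s hs
      simp only [mem_Icc] at hs
      simp only [mem_filter, mem_Icc]
      refine ⟨⟨by omega, hs.2⟩, ?_⟩
      -- key analytic estimate
      have habs : |(e : ℝ)| = (e.natAbs : ℝ) := by
        rw [Nat.cast_natAbs, Int.cast_abs]
      have hes : (e.natAbs : ℝ) + 1 ≤ (s : ℝ) := by exact_mod_cast hs.1
      have hNt : (N : ℝ) * (t - K) - e = (N : ℝ) * t - ((a : ℝ) - b) := by
        have : (a : ℝ) - b - e = (N : ℝ) * K := by exact_mod_cast hK
        linarith
      have h1 : |(N : ℝ) * (t - K)| < 1 + |(e : ℝ)| := by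
        calc |(N : ℝ) * (t - K)| ≤ |(N : ℝ) * (t - K) - e| + |(e : ℝ)| := by
              have := abs_sub_abs_le_abs_sub ((N : ℝ) * (t - K)) (e : ℝ)
              have := abs_sub ((N : ℝ) * (t - K)) (e : ℝ)
              nlinarith [abs_nonneg ((N:ℝ)*(t-K) - e), abs_nonneg ((e:ℝ))]
          _ < 1 + |(e : ℝ)| := by rw [hNt]; linarith
      have h2 : (N : ℝ) * |t - K| < s := by
        rw [← abs_of_pos hN, ← abs_mul]
        calc |(N : ℝ) * (t - K)| < 1 + |(e : ℝ)| := h1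
          _ ≤ s := by rw [habs]; linarith
      have h3 : |t - (K : ℝ)| ≤ (s : ℝ) / N := by
        rw [le_div_iff₀ hN]
        linarith [h2]
      calc distToInt t = |t - round t| := rfl
        _ ≤ |t - (K : ℝ)| := round_le t K
        _ ≤ (s : ℝ) / N := h3
    calc S - e.natAbs = (Icc (e.natAbs + 1) S).card := by rw [Nat.card_Icc]; omega
      _ ≤ _ := Finset.card_le_card hsub


lemma innerB {N : ℕ} [NeZero N] (ι : Fin N → ZMod N) (k l : ℕ) :
    ∑ j : ZMod N, ((univ.filter (fun n => ι n = j + (k : ZMod N))).card *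
        (univ.filter (fun n => ι n = j + (l : ZMod N))).card)
      = ∑ m : Fin N, ∑ n : Fin N, if ((k : ZMod N) - l = ι m - ι n) then 1 else 0 := by
  have step1 : ∀ j : ZMod N,
      (univ.filter (fun n => ι n = j + (k : ZMod N))).card *
        (univ.filter (fun n => ι n = j + (l : ZMod N))).card
      = ∑ m : Fin N, ∑ n : Fin N,
          (if ι m = j + (k : ZMod N) then 1 else 0) * (if ι n = j + (l : ZMod N) then 1 else 0) := by
    intro j
    rw [Finset.card_filter, Finset.card_filter, Finset.sum_mul_sum]
  simp only [step1]
  rw [Finset.sum_comm]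
  congr 1
  ext m
  rw [Finset.sum_comm]
  congr 1
  ext n
  have step2 : ∀ j : ZMod N,
      ((if ι m = j + (k : ZMod N) then 1 else 0) * (if ι n = j + (l : ZMod N) then 1 else 0) : ℕ)
      = if ((k : ZMod N) - l = ι m - ι n) then (if j = ι m - (k : ZMod N) then 1 else 0) else 0 := by
    intro j
    by_cases h1 : ι m = j + (k : ZMod N) <;> by_cases h2 : ι n = j + (l : ZMod N)
    · rw [if_pos h1, if_pos h2, if_pos (by rw [h1, h2]; ring), if_pos (by rw [h1]; ring)]
    · rw [if_pos h1, if_neg h2, mul_zero,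
        if_neg (fun hq : (k : ZMod N) - l = ι m - ι n => h2 (by linear_combination h1 + hq))]
    · rw [if_neg h1, if_pos h2, zero_mul,
        if_neg (fun hq : (k : ZMod N) - l = ι m - ι n => h1 (by linear_combination h2 - hq))]
    · rw [if_neg h1, if_neg h2, zero_mul]
      by_cases hq : (k : ZMod N) - l = ι m - ι n
      · rw [if_pos hq, if_neg (fun hj : j = ι m - (k : ZMod N) => h1 (by linear_combination -hj))]
      · rw [if_neg hq]
  simp only [step2]
  by_cases hq : (k : ZMod N) - l = ι m - ι n
  · simp only [hq, if_true]
    rw [Finset.sum_ite_eq' univ (ι m - (k : ZMod N)) (fun _ => 1)]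
    simp
  · simp [hq]


lemma lemB {N S : ℕ} [NeZero N] (hSN : 2 * S < N) (ι : Fin N → ZMod N) :
    ∑ j : ZMod N, (∑ k ∈ range S, (univ.filter (fun n => ι n = j + (k : ZMod N))).card) ^ 2
      ≤ ∑ m : Fin N, ∑ n : Fin N, (S - (ι m - ι n).valMinAbs.natAbs) := by
  have e1 : ∑ j : ZMod N,
        (∑ k ∈ range S, (univ.filter (fun n => ι n = j + (k : ZMod N))).card) ^ 2
      = ∑ j : ZMod N, ∑ q ∈ range S ×ˢ range S,
          ((univ.filter (fun n => ι n = j + (q.1 : ZMod N))).card *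
            (univ.filter (fun n => ι n = j + (q.2 : ZMod N))).card) := by
    refine Finset.sum_congr rfl fun j _ => ?_
    rw [sq, Finset.sum_mul_sum, ← Finset.sum_product']
  have e2 : ∀ q : ℕ × ℕ,
      ∑ j : ZMod N, ((univ.filter (fun n => ι n = j + (q.1 : ZMod N))).card *
          (univ.filter (fun n => ι n = j + (q.2 : ZMod N))).card)
        = ∑ p ∈ (univ : Finset (Fin N)) ×ˢ (univ : Finset (Fin N)),
            if ((q.1 : ZMod N) - q.2 = ι p.1 - ι p.2) then 1 else 0 := by
    intro q
    rw [innerB ι q.1 q.2, ← Finset.sum_product']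
  rw [e1, Finset.sum_comm]
  calc ∑ q ∈ range S ×ˢ range S, ∑ j : ZMod N,
          ((univ.filter (fun n => ι n = j + (q.1 : ZMod N))).card *
            (univ.filter (fun n => ι n = j + (q.2 : ZMod N))).card)
      = ∑ q ∈ range S ×ˢ range S, ∑ p ∈ (univ : Finset (Fin N)) ×ˢ univ,
          if ((q.1 : ZMod N) - q.2 = ι p.1 - ι p.2) then 1 else 0 :=
        Finset.sum_congr rfl fun q _ => e2 q
    _ = ∑ p ∈ (univ : Finset (Fin N)) ×ˢ univ, ∑ q ∈ range S ×ˢ range S,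
          if ((q.1 : ZMod N) - q.2 = ι p.1 - ι p.2) then 1 else 0 := Finset.sum_comm
    _ = ∑ p ∈ (univ : Finset (Fin N)) ×ˢ univ,
          ((range S ×ˢ range S).filter
            (fun q : ℕ × ℕ => ((q.1 : ZMod N) - q.2) = ι p.1 - ι p.2)).card := by
        refine Finset.sum_congr rfl fun p _ => ?_
        rw [Finset.card_filter]
    _ ≤ ∑ p ∈ (univ : Finset (Fin N)) ×ˢ univ, (S - (ι p.1 - ι p.2).valMinAbs.natAbs) :=
        Finset.sum_le_sum fun p _ => cardC' hSN _
    _ = ∑ m : Fin N, ∑ n : Fin N, (S - (ι m - ι n).valMinAbs.natAbs) := Finset.sum_product _ _ _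

theorem stmt_7 (N : ℕ) (x : Fin N → ℝ)
    (hx : ∀ n, x n ∈ Set.Ico (0 : ℝ) 1)
    (F : ℕ → ℝ)
    (hF : ∀ s : ℕ, F s = (1 / N : ℝ) * (Finset.univ.filter (fun p : Fin N × Fin N =>
      p.1 ≠ p.2 ∧ distToInt (x p.1 - x p.2) ≤ (s : ℝ) / N)).card)
    (S : ℕ) (hS : 1 ≤ S) (hSN : 2 * S < N) :
    (S : ℝ) ≤ (1 / S : ℝ) * ∑ s ∈ Finset.Icc 1 S, (F s + 1) := by
  haveI : NeZero N := ⟨by omega⟩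
  have hNR : (0 : ℝ) < N := by
    have : 0 < N := by omega
    exact_mod_cast this
  have hSR : (0 : ℝ) < S := by exact_mod_cast hS
  set ι : Fin N → ZMod N := fun n => ((⌊(N : ℝ) * x n⌋ : ℤ) : ZMod N) with hι
  -- fiber counts sum to N
  have hc : ∑ j : ZMod N, (univ.filter (fun n => ι n = j)).card = N := by
    have h := Finset.card_eq_sum_card_fiberwise
      (f := ι) (s := (univ : Finset (Fin N))) (t := (univ : Finset (ZMod N)))
      (fun n _ => mem_univ _)
    rw [← h, card_univ, Fintype.card_fin]
  -- window sums total S * N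
  have hb : ∑ j : ZMod N,
      (∑ k ∈ range S, (univ.filter (fun n => ι n = j + (k : ZMod N))).card) = S * N := by
    rw [Finset.sum_comm]
    have hshift : ∀ k : ℕ,
        ∑ j : ZMod N, (univ.filter (fun n => ι n = j + (k : ZMod N))).card = N := by
      intro k
      calc ∑ j : ZMod N, (univ.filter (fun n => ι n = j + (k : ZMod N))).card
          = ∑ j : ZMod N, (univ.filter (fun n => ι n = j)).card :=
            Fintype.sum_bijective (· + (k : ZMod N)) (Equiv.addRight ((k : ZMod N))).bijective
              _ _ (fun j => rfl)
        _ = N := hc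
    rw [Finset.sum_congr rfl (fun k _ => hshift k), Finset.sum_const, card_range, smul_eq_mul]
  -- Cauchy-Schwarz
  have hCS : S * S * N ≤ ∑ j : ZMod N,
      (∑ k ∈ range S, (univ.filter (fun n => ι n = j + (k : ZMod N))).card) ^ 2 := by
    have h1 := sq_sum_le_card_mul_sum_sq (s := (univ : Finset (ZMod N)))
      (f := fun j => ((∑ k ∈ range S, (univ.filter (fun n => ι n = j + (k : ZMod N))).card : ℕ) : ℝ))
    rw [card_univ, ZMod.card] at h1
    have h2 : (∑ j : ZMod N, ((∑ k ∈ range S,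
        (univ.filter (fun n => ι n = j + (k : ZMod N))).card : ℕ) : ℝ)) = ((S * N : ℕ) : ℝ) := by
      rw [← Nat.cast_sum, hb]
    rw [h2] at h1
    have h3 : ((S * N : ℕ) : ℝ) ^ 2 = ((S * S * N : ℕ) : ℝ) * N := by push_cast; ring
    have h4 : (N : ℝ) * ∑ j : ZMod N, ((∑ k ∈ range S,
        (univ.filter (fun n => ι n = j + (k : ZMod N))).card : ℕ) : ℝ) ^ 2
        = ((∑ j : ZMod N, (∑ k ∈ range S,
            (univ.filter (fun n => ι n = j + (k : ZMod N))).card) ^ 2 : ℕ) : ℝ) * N := by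
      push_cast; ring
    rw [h3, h4] at h1
    have h5 := le_of_mul_le_mul_right h1 hNR
    exact_mod_cast h5
  -- per-pair lower bound on the number of good s
  have hA : ∀ p : Fin N × Fin N, S - (ι p.1 - ι p.2).valMinAbs.natAbs ≤
      ((Icc 1 S).filter (fun s : ℕ => distToInt (x p.1 - x p.2) ≤ (s : ℝ) / N)).card := by
    intro p
    apply cardA (a := ⌊(N : ℝ) * x p.1⌋) (b := ⌊(N : ℝ) * x p.2⌋)
    · have f1 : ((⌊(N : ℝ) * x p.1⌋ : ℤ) : ℝ) ≤ (N : ℝ) * x p.1 := Int.floor_le _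
      have f2 : (N : ℝ) * x p.1 < (⌊(N : ℝ) * x p.1⌋ : ℤ) + 1 := Int.lt_floor_add_one _
      have f3 : ((⌊(N : ℝ) * x p.2⌋ : ℤ) : ℝ) ≤ (N : ℝ) * x p.2 := Int.floor_le _
      have f4 : (N : ℝ) * x p.2 < (⌊(N : ℝ) * x p.2⌋ : ℤ) + 1 := Int.lt_floor_add_one _
      rw [abs_lt, mul_sub]
      constructor <;> linarith
    · push_cast
      rfl
  -- summing over pairs and swapping
  have hswap : ∑ p : Fin N × Fin N,
      ((Icc 1 S).filter (fun s : ℕ => distToInt (x p.1 - x p.2) ≤ (s : ℝ) / N)).card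
      = ∑ s ∈ Icc 1 S, (univ.filter (fun p : Fin N × Fin N =>
          distToInt (x p.1 - x p.2) ≤ (s : ℝ) / N)).card := by
    simp only [Finset.card_filter]
    rw [Finset.sum_comm]
  have hmain : S * S * N ≤ ∑ s ∈ Icc 1 S, (univ.filter (fun p : Fin N × Fin N =>
      distToInt (x p.1 - x p.2) ≤ (s : ℝ) / N)).card := by
    calc S * S * N ≤ _ := hCS
      _ ≤ ∑ m : Fin N, ∑ n : Fin N, (S - (ι m - ι n).valMinAbs.natAbs) := lemB hSN ι
      _ = ∑ p : Fin N × Fin N, (S - (ι p.1 - ι p.2).valMinAbs.natAbs) := by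
          exact (Fintype.sum_prod_type
            (f := fun p : Fin N × Fin N => S - (ι p.1 - ι p.2).valMinAbs.natAbs)).symm
      _ ≤ ∑ p : Fin N × Fin N,
          ((Icc 1 S).filter (fun s : ℕ => distToInt (x p.1 - x p.2) ≤ (s : ℝ) / N)).card :=
          Finset.sum_le_sum fun p _ => hA p
      _ = _ := hswap
  -- diagonal accounting
  have hdiag : ∀ s : ℕ, (univ.filter (fun p : Fin N × Fin N =>
      p.1 ≠ p.2 ∧ distToInt (x p.1 - x p.2) ≤ (s : ℝ) / N)).card + N
      = (univ.filter (fun p : Fin N × Fin N =>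
          distToInt (x p.1 - x p.2) ≤ (s : ℝ) / N)).card := by
    intro s
    have hzero : ∀ a : Fin N, distToInt (x a - x a) ≤ (s : ℝ) / N := by
      intro a
      have h0 : distToInt (x a - x a) = 0 := by simp [distToInt]
      rw [h0]
      positivity
    have hNcard : (univ.filter (fun p : Fin N × Fin N =>
        p.1 = p.2 ∧ distToInt (x p.1 - x p.2) ≤ (s : ℝ) / N)).card = N := by
      have himg : univ.filter (fun p : Fin N × Fin N =>
          p.1 = p.2 ∧ distToInt (x p.1 - x p.2) ≤ (s : ℝ) / N)
          = univ.image (fun a : Fin N => (a, a)) := by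
        ext p
        simp only [mem_filter, mem_univ, true_and, Finset.mem_image]
        constructor
        · rintro ⟨h1, _⟩
          exact ⟨p.1, by rw [Prod.ext_iff]; exact ⟨rfl, h1⟩⟩
        · rintro ⟨a, ha⟩
          rw [← ha]
          exact ⟨rfl, hzero a⟩
      rw [himg, Finset.card_image_of_injective _ (fun a b h => (Prod.ext_iff.1 h).1),
        card_univ, Fintype.card_fin]
    have hsplit : (univ.filter (fun p : Fin N × Fin N =>
        p.1 ≠ p.2 ∧ distToInt (x p.1 - x p.2) ≤ (s : ℝ) / N)).card
        + (univ.filter (fun p : Fin N × Fin N =>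
            p.1 = p.2 ∧ distToInt (x p.1 - x p.2) ≤ (s : ℝ) / N)).card
        = (univ.filter (fun p : Fin N × Fin N =>
            distToInt (x p.1 - x p.2) ≤ (s : ℝ) / N)).card := by
      rw [Finset.card_filter, Finset.card_filter, Finset.card_filter,
        ← Finset.sum_add_distrib]
      refine Finset.sum_congr rfl fun p _ => ?_
      by_cases h1 : p.1 = p.2 <;>
        by_cases h2 : distToInt (x p.1 - x p.2) ≤ (s : ℝ) / N <;> simp [h1, h2]
    rw [hNcard] at hsplit
    exact hsplit
  -- final arithmetic
  have hsum : ∑ s ∈ Icc 1 S, (F s + 1) = (1 / N) * ∑ s ∈ Icc 1 S,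
      ((univ.filter (fun p : Fin N × Fin N =>
        distToInt (x p.1 - x p.2) ≤ (s : ℝ) / N)).card : ℝ) := by
    rw [Finset.mul_sum]
    refine Finset.sum_congr rfl fun s _ => ?_
    have hcast : ((univ.filter (fun p : Fin N × Fin N =>
        p.1 ≠ p.2 ∧ distToInt (x p.1 - x p.2) ≤ (s : ℝ) / N)).card : ℝ) + N
        = ((univ.filter (fun p : Fin N × Fin N =>
            distToInt (x p.1 - x p.2) ≤ (s : ℝ) / N)).card : ℝ) := by
      exact_mod_cast congrArg (Nat.cast (R := ℝ)) (hdiag s)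
    rw [hF s, ← hcast, mul_add, one_div_mul_cancel hNR.ne']
  rw [hsum]
  have hm : ((S * S * N : ℕ) : ℝ) ≤ ∑ s ∈ Icc 1 S,
      ((univ.filter (fun p : Fin N × Fin N =>
        distToInt (x p.1 - x p.2) ≤ (s : ℝ) / N)).card : ℝ) := by
    rw [← Nat.cast_sum]
    exact_mod_cast hmain
  have hSSN : ((S * S * N : ℕ) : ℝ) = (S : ℝ) * S * N := by push_cast; ring
  calc (S : ℝ) = (1 / S) * ((1 / N) * ((S : ℝ) * S * N)) := by field_simp
    _ ≤ (1 / S) * ((1 / N) * ∑ s ∈ Icc 1 S,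
        ((univ.filter (fun p : Fin N × Fin N =>
          distToInt (x p.1 - x p.2) ≤ (s : ℝ) / N)).card : ℝ)) := by
        rw [← hSSN]
        apply mul_le_mul_of_nonneg_left _ (by positivity)
        exact mul_le_mul_of_nonneg_left hm (by positivity)
end
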